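/- Let π : X → Y be a 1-block factor map from a two-sided 1-step mixing shift of finite type X onto the sofic shift Y = π(X), and let y be a periodic point in Y. Then there exist conjugacies (shift-commuting homeomorphisms) φ : X → X̄ and ψ : Y → Ȳ onto shift spaces X̄ and Ȳ such that π̄ := ψ∘π∘φ⁻¹ : X̄ → Ȳ is a 1-block factor map and, for ȳ = ψ(y) and all integers m ≤ n, the set of blocks π̄⁻¹(ȳ)|_{[m,n]} (restrictions to [m,n] of points of X̄ mapped to ȳ) equals the set π̄⁻¹(ȳ|_{[m,n]}) of all blocks of X̄ of the same length mapped by the block map of π̄ to the word ȳ|_{[m,n]}. -/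

import Mathlib

open MeasureTheory Filter Topology
open scoped ENNReal

namespace GibbsPaper

universe u

variable {A : Type*} {B : Type*}

/-- The shift map `(σ x) i = x (i+1)` on the full shift `ℤ → A`. -/
def shiftMap (x : ℤ → A) : ℤ → A := fun i => x (i + 1)

/-- The 1-step shift of finite type determined by the allowed-transition set `E`. -/
def SFT (E : Set (A × A)) : Set (ℤ → A) := {x | ∀ i : ℤ, (x i, x (i + 1)) ∈ E}

/-- `w` is a word of the language of `X`. -/
def WordIn (X : Set (ℤ → A)) (w : List A) : Prop :=
  ∃ x ∈ X, ∃ k : ℤ, ∀ j : Fin w.length, x (k + (j.1 : ℤ)) = w.get j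

/-- `X` is (topologically) mixing. -/
def Mixing (X : Set (ℤ → A)) : Prop :=
  ∀ u w : List A, WordIn X u → WordIn X w →
    ∃ N : ℕ, ∀ n : ℕ, N ≤ n → ∃ v : List A, v.length = n ∧ WordIn X (u ++ v ++ w)

/-- The 1-block (sliding block) code induced by a symbol map `Φ`. -/
def blockCode (Φ : A → B) (x : ℤ → A) : ℤ → B := fun i => Φ (x i)

/-- The fiber `π⁻¹(y)` of the 1-block factor map induced by `Φ`. -/
def fiber (X : Set (ℤ → A)) (Φ : A → A) (y : ℤ → A) : Set (ℤ → A) :=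
  {x | x ∈ X ∧ blockCode Φ x = y}

/-- `xb` is a right `m`-bridge from `x` to `x'` (all of them preimages of `y`). -/
def RightBridge (X : Set (ℤ → A)) (Φ : A → A) (y x x' xb : ℤ → A) (m : ℤ) : Prop :=
  xb ∈ fiber X Φ y ∧ (∀ i : ℤ, i ≤ m → xb i = x i) ∧
    ∃ n : ℤ, m < n ∧ ∀ i : ℤ, n ≤ i → xb i = x' i

/-- Right transition `x →ʳ x'`: a right `m`-bridge from `x` to `x'` for every `m`. -/
def RightTrans (X : Set (ℤ → A)) (Φ : A → A) (y x x' : ℤ → A) : Prop :=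
  ∀ m : ℤ, ∃ xb : ℤ → A, RightBridge X Φ y x x' xb m

/-- Right equivalence `x ∼ʳ x'`. -/
def RightEquiv (X : Set (ℤ → A)) (Φ : A → A) (y x x' : ℤ → A) : Prop :=
  RightTrans X Φ y x x' ∧ RightTrans X Φ y x' x

/-- The right transition class of `x` over `y`. -/
def rightClass (X : Set (ℤ → A)) (Φ : A → A) (y x : ℤ → A) : Set (ℤ → A) :=
  {x' | x' ∈ fiber X Φ y ∧ RightEquiv X Φ y x x'}

/-- `C` is a right transition class over `y`. -/
def IsRightClass (X : Set (ℤ → A)) (Φ : A → A) (y : ℤ → A) (C : Set (ℤ → A)) : Prop :=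
  ∃ x ∈ fiber X Φ y, C = rightClass X Φ y x

/-- Transition `C →ʳ C'` between right classes. -/
def ClassTrans (X : Set (ℤ → A)) (Φ : A → A) (y : ℤ → A) (C C' : Set (ℤ → A)) : Prop :=
  ∃ x ∈ C, ∃ x' ∈ C', RightTrans X Φ y x x'

/-- `xb` is a left `m`-bridge from `x` to `x'`. -/
def LeftBridge (X : Set (ℤ → A)) (Φ : A → A) (y x x' xb : ℤ → A) (m : ℤ) : Prop :=
  xb ∈ fiber X Φ y ∧ (∀ i : ℤ, m ≤ i → xb i = x i) ∧
    ∃ n : ℤ, n < m ∧ ∀ i : ℤ, i ≤ n → xb i = x' i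

/-- Left transition `x →ˡ x'`. -/
def LeftTrans (X : Set (ℤ → A)) (Φ : A → A) (y x x' : ℤ → A) : Prop :=
  ∀ m : ℤ, ∃ xb : ℤ → A, LeftBridge X Φ y x x' xb m

/-- Left equivalence `x ∼ˡ x'`. -/
def LeftEquiv (X : Set (ℤ → A)) (Φ : A → A) (y x x' : ℤ → A) : Prop :=
  LeftTrans X Φ y x x' ∧ LeftTrans X Φ y x' x

/-- The left transition class of `x` over `y`. -/
def leftClass (X : Set (ℤ → A)) (Φ : A → A) (y x : ℤ → A) : Set (ℤ → A) :=
  {x' | x' ∈ fiber X Φ y ∧ LeftEquiv X Φ y x x'}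

/-- `C` is a left transition class over `y`. -/
def IsLeftClass (X : Set (ℤ → A)) (Φ : A → A) (y : ℤ → A) (C : Set (ℤ → A)) : Prop :=
  ∃ x ∈ fiber X Φ y, C = leftClass X Φ y x

/-- Two points are left asymptotic. -/
def LeftAsymp (y y' : ℤ → A) : Prop := ∃ n : ℤ, ∀ i : ℤ, i ≤ n → y i = y' i

/-- Two points are right asymptotic. -/
def RightAsymp (y y' : ℤ → A) : Prop := ∃ n : ℤ, ∀ i : ℤ, n ≤ i → y i = y' i

/-- The factor map induced by `Φ` is right continuing. -/
def RightContinuing (X : Set (ℤ → A)) (Φ : A → A) : Prop :=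
  ∀ x ∈ X, ∀ y ∈ blockCode Φ '' X, LeftAsymp (blockCode Φ x) y →
    ∃ x' ∈ fiber X Φ y, LeftAsymp x x'

/-- The factor map induced by `Φ` is left continuing. -/
def LeftContinuing (X : Set (ℤ → A)) (Φ : A → A) : Prop :=
  ∀ x ∈ X, ∀ y ∈ blockCode Φ '' X, RightAsymp (blockCode Φ x) y →
    ∃ x' ∈ fiber X Φ y, RightAsymp x x'

/-- Bi-continuing factor map. -/
def BiContinuing (X : Set (ℤ → A)) (Φ : A → A) : Prop :=
  RightContinuing X Φ ∧ LeftContinuing X Φ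

/-- `y` is a (σ-)periodic point. -/
def IsPeriodicPt (y : ℤ → A) : Prop := ∃ p : ℕ, 0 < p ∧ shiftMap^[p] y = y

/-- `p` is the smallest period of the periodic point `y`. -/
def IsLeastPeriod (y : ℤ → A) (p : ℕ) : Prop :=
  0 < p ∧ shiftMap^[p] y = y ∧ ∀ q : ℕ, 0 < q → shiftMap^[q] y = y → p ≤ q

/-- The set `C` has period `p` (`σᵖ C = C`). -/
def HasClassPeriod (C : Set (ℤ → A)) (p : ℕ) : Prop :=
  0 < p ∧ (shiftMap^[p]) '' C = C

/-- `p` is the smallest period of the set `C`. -/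
def IsLeastClassPeriod (C : Set (ℤ → A)) (p : ℕ) : Prop :=
  HasClassPeriod C p ∧ ∀ q : ℕ, HasClassPeriod C q → p ≤ q

/-- The cylinder set of the word `w` placed at coordinate `k`. -/
def cylList (k : ℤ) (w : List A) : Set (ℤ → A) :=
  {x | ∀ j : Fin w.length, x (k + (j.1 : ℤ)) = w.get j}

/-- The cylinder set of all points agreeing with `z` on the coordinates `[m, n]`. -/
def cylSeg (z : ℤ → A) (m n : ℤ) : Set (ℤ → A) :=
  {x | ∀ i : ℤ, m ≤ i → i ≤ n → x i = z i}

/-- The union of the cylinder sets (on coordinates `[m,n]`) of the blocks appearing in `S`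
on the interval `[m,n]`. -/
def blockUnion (S : Set (ℤ → A)) (m n : ℤ) : Set (ℤ → A) :=
  {x | ∃ x' ∈ S, ∀ i : ℤ, m ≤ i → i ≤ n → x i = x' i}

/-- The transition-probability weight of a chain starting at `a`. -/
noncomputable def chainProb (P : A → A → ℝ≥0∞) : A → List A → ℝ≥0∞
  | _, [] => 1
  | a, b :: l => P a b * chainProb P b l

/-- The Markov probability of a word. -/
noncomputable def wordProb (p : A → ℝ≥0∞) (P : A → A → ℝ≥0∞) : List A → ℝ≥0∞
  | [] => 1
  | a :: l => p a * chainProb P a l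

/-- `μ` is the 1-step (stationary) Markov measure on `X` with initial probability vector `p`
and stochastic matrix `P`. -/
structure IsMarkov [Fintype A] [MeasurableSpace A] (X : Set (ℤ → A))
    (μ : Measure (ℤ → A)) (p : A → ℝ≥0∞) (P : A → A → ℝ≥0∞) : Prop where
  isProb : IsProbabilityMeasure μ
  shiftInv : ∀ s : Set (ℤ → A), MeasurableSet s → μ (shiftMap ⁻¹' s) = μ s
  initSum : ∑ a : A, p a = 1
  rowSum : ∀ a : A, ∑ b : A, P a b = 1
  cylIn : ∀ w : List A, WordIn X w → μ (cylList 0 w) = wordProb p P w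
  cylOut : ∀ w : List A, ¬ WordIn X w → μ (cylList 0 w) = 0

/-- `μ` gives positive measure to every cylinder of a word of the language of `X`. -/
def FullySupported [Fintype A] [MeasurableSpace A] (X : Set (ℤ → A))
    (μ : Measure (ℤ → A)) : Prop :=
  ∀ w : List A, WordIn X w → 0 < μ (cylList 0 w)

/-- `μ` is a fully supported 1-step Markov measure on `X`. -/
def IsFSMarkov [Fintype A] [MeasurableSpace A] (X : Set (ℤ → A))
    (μ : Measure (ℤ → A)) : Prop :=
  ∃ p P, IsMarkov X μ p P ∧ FullySupported X μ

/-- Birkhoff sum `S_0^{n-1} f (z)`. -/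
def birkhoff (f : (ℤ → A) → ℝ) (z : ℤ → A) (n : ℕ) : ℝ :=
  ∑ j ∈ Finset.range n, f (shiftMap^[j] z)

/-- The two-sided Gibbs inequality for `ν` on `Y` with potential `f`, constants `K₁, K₂`
and pressure constant `Pr`. -/
def GibbsIneq [Fintype A] [MeasurableSpace A] (Y : Set (ℤ → A)) (ν : Measure (ℤ → A))
    (f : (ℤ → A) → ℝ) (K₁ K₂ Pr : ℝ) : Prop :=
  ∀ z ∈ Y, ∀ n : ℕ, 1 ≤ n →
    K₁ < (ν (cylSeg z 0 ((n : ℤ) - 1))).toReal /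
        Real.exp (-(n : ℝ) * Pr + birkhoff f z n) ∧
    (ν (cylSeg z 0 ((n : ℤ) - 1))).toReal /
        Real.exp (-(n : ℝ) * Pr + birkhoff f z n) < K₂

/-- `ν` is a Gibbs measure on `Y` for the potential `f`. -/
def IsGibbs [Fintype A] [MeasurableSpace A] (Y : Set (ℤ → A)) (ν : Measure (ℤ → A))
    (f : (ℤ → A) → ℝ) : Prop :=
  ∃ K₁ K₂ Pr : ℝ, 0 < K₁ ∧ 0 < K₂ ∧ GibbsIneq Y ν f K₁ K₂ Pr


/-- `φ` is a sliding block code on `S`: it is shift-commuting and its values are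
determined by a finite window of coordinates (this is the Curtis–Hedlund–Lyndon
characterization of continuous shift-commuting maps). -/
def SlidingBlockOn (S : Set (ℤ → A)) (φ : (ℤ → A) → (ℤ → B)) : Prop :=
  (∀ x ∈ S, φ (shiftMap x) = shiftMap (φ x)) ∧
  ∃ R : ℕ, ∀ x ∈ S, ∀ x' ∈ S, ∀ i : ℤ,
    (∀ j : ℤ, i - (R : ℤ) ≤ j → j ≤ i + (R : ℤ) → x j = x' j) → φ x i = φ x' i

/-! ### auxiliary lemmas -/

def IntPer (y : ℤ → A) (d : ℤ) : Prop := ∀ i : ℤ, y (i + d) = y i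

lemma shift_iter_apply (n : ℕ) (x : ℤ → A) (i : ℤ) :
    (shiftMap^[n] x) i = x (i + n) := by
  induction n generalizing x i with
  | zero => simp
  | succ n ih =>
    rw [Function.iterate_succ_apply, ih, shiftMap]
    congr 1
    push_cast
    ring

lemma intPer_neg {y : ℤ → A} {d : ℤ} (h : IntPer y d) : IntPer y (-d) := by
  intro i
  have h2 := h (i + -d)
  have h3 : i + -d + d = i := by ring
  rw [h3] at h2
  exact h2.symm

lemma intPer_add {y : ℤ → A} {d e : ℤ} (h1 : IntPer y d) (h2 : IntPer y e) :
    IntPer y (d + e) := by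
  intro i
  have h3 : i + (d + e) = (i + e) + d := by ring
  rw [h3, h1 (i + e), h2 i]

lemma intPer_mul {y : ℤ → A} {d : ℤ} (h : IntPer y d) (c : ℤ) : IntPer y (c * d) := by
  induction c using Int.induction_on with
  | zero => intro i; simp
  | succ n ih =>
    have : ((n : ℤ) + 1) * d = (n : ℤ) * d + d := by ring
    rw [this]
    exact intPer_add ih h
  | pred n ih =>
    have : (-(n : ℤ) - 1) * d = (-(n : ℤ)) * d + -d := by ring
    rw [this]
    exact intPer_add ih (intPer_neg h)

lemma intPer_dvd_apply {y : ℤ → A} {p : ℕ} (hper : IntPer y (p : ℤ))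
    {i j : ℤ} (h : (p : ℤ) ∣ i - j) : y i = y j := by
  obtain ⟨c, hc⟩ := h
  have h1 : i = j + c * (p : ℤ) := by linarith [hc]
  rw [h1]
  exact intPer_mul hper c j

lemma exists_least_period (y : ℤ → A) (h : IsPeriodicPt y) :
    ∃ p : ℕ, 0 < p ∧ IntPer y (p : ℤ) ∧ ∀ d : ℤ, IntPer y d → (p : ℤ) ∣ d := by
  classical
  obtain ⟨p₀, hp₀, hy₀⟩ := h
  have hex : ∃ n : ℕ, 0 < n ∧ shiftMap^[n] y = y := ⟨p₀, hp₀, hy₀⟩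
  set P := Nat.find hex with hP
  have hspec := Nat.find_spec hex
  have hPper : IntPer y (P : ℤ) := by
    intro i
    have := congrFun hspec.2 i
    rwa [shift_iter_apply] at this
  refine ⟨P, hspec.1, hPper, ?_⟩
  intro d hd
  set r := d % (P : ℤ) with hr
  have hPne : (P : ℤ) ≠ 0 := by exact_mod_cast hspec.1.ne'
  have hr0 : 0 ≤ r := Int.emod_nonneg d hPne
  have hrlt : r < (P : ℤ) := Int.emod_lt_of_pos d (by exact_mod_cast hspec.1)
  have hrper : IntPer y r := by
    have hdef : r = d + -((d / (P : ℤ)) * (P : ℤ)) := by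
      rw [hr, Int.emod_def]; ring
    rw [hdef]
    exact intPer_add hd (intPer_neg (intPer_mul hPper _))
  rcases eq_or_lt_of_le hr0 with he | hlt
  · exact Int.dvd_of_emod_eq_zero he.symm
  · exfalso
    have hiter : shiftMap^[r.toNat] y = y := by
      funext i
      rw [shift_iter_apply]
      have : ((r.toNat : ℤ)) = r := Int.toNat_of_nonneg hr0
      rw [this]
      exact hrper i
    have hpos : 0 < r.toNat := by omega
    have := Nat.find_min' hex ⟨hpos, hiter⟩
    rw [← hP] at this
    omega

/-- Pigeonhole: in any window of length `n₀+1` there are two positions congruent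
mod `p` carrying the same symbol. -/
lemma exists_repeat [Fintype A] (x : ℤ → A) (p n₀ : ℕ) (hp : 0 < p)
    (hn₀ : p * Fintype.card A ≤ n₀) (c : ℤ) :
    ∃ s t : ℤ, c ≤ s ∧ s < t ∧ t ≤ c + n₀ ∧ (p : ℤ) ∣ t - s ∧ x s = x t := by
  haveI : NeZero p := ⟨hp.ne'⟩
  have hcard : Fintype.card (ZMod p × A) < Fintype.card (Fin (n₀ + 1)) := by
    simp only [Fintype.card_prod, ZMod.card, Fintype.card_fin]
    omega
  obtain ⟨a, b, hne, heq⟩ := Fintype.exists_ne_map_eq_of_card_lt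
    (fun s : Fin (n₀ + 1) => ((((c + (s : ℤ)) : ℤ) : ZMod p), x (c + (s : ℤ)))) hcard
  have h1 : ((c + (a : ℤ) : ℤ) : ZMod p) = ((c + (b : ℤ) : ℤ) : ZMod p) :=
    congrArg Prod.fst heq
  have h2 : x (c + (a : ℤ)) = x (c + (b : ℤ)) := congrArg Prod.snd heq
  have hdvd : (p : ℤ) ∣ (c + (b : ℤ)) - (c + (a : ℤ)) :=
    ((ZMod.intCast_eq_intCast_iff _ _ _).mp h1).dvd
  have hvne : (a : ℤ) ≠ (b : ℤ) := by
    intro hh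
    exact hne (Fin.ext (by exact_mod_cast hh))
  rcases lt_or_gt_of_ne hvne with hlt | hgt
  · exact ⟨c + a, c + b, by omega, by omega, by
      have := b.isLt; omega, hdvd, h2⟩
  · refine ⟨c + b, c + a, by omega, by omega, by
      have := a.isLt; omega, ?_, h2.symm⟩
    have : (p : ℤ) ∣ -((c + (b : ℤ)) - (c + (a : ℤ))) := hdvd.neg_right
    simpa using this

/-- **Margin extension.** If `x ∈ X` lies over `y` on `[a - n₀, b + n₀]`, then there is a
point of the fiber of `y` agreeing with `x` on `[a, b]`. -/
lemma margin_extend [Fintype A] (E : Set (A × A)) (Φ : A → A) (y : ℤ → A)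
    (p : ℕ) (hp : 0 < p) (hper : IntPer y (p : ℤ))
    (n₀ : ℕ) (hn₀ : p * Fintype.card A ≤ n₀)
    (a b : ℤ) (hab : a ≤ b) (x : ℤ → A) (hx : x ∈ SFT E)
    (hover : ∀ l : ℤ, a - n₀ ≤ l → l ≤ b + n₀ → Φ (x l) = y l) :
    ∃ x', x' ∈ SFT E ∧ blockCode Φ x' = y ∧ ∀ l : ℤ, a ≤ l → l ≤ b → x' l = x l := by
  obtain ⟨u, u', hu1, hu2, hu3, hud, hueq⟩ := exists_repeat x p n₀ hp hn₀ (a - n₀)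
  obtain ⟨t, t', ht1, ht2, ht3, htd, hteq⟩ := exists_repeat x p n₀ hp hn₀ b
  set d₂ := u' - u with hd₂def
  set d₁ := t' - t with hd₁def
  have hd₂ : 0 < d₂ := by omega
  have hd₁ : 0 < d₁ := by omega
  have hu'a : u' ≤ a := by omega
  have hbt : b ≤ t := ht1
  set x' : ℤ → A := fun l =>
    if l < u then x (u + (l - u) % d₂) else if l ≤ t' then x l else x (t + (l - t) % d₁)
    with hx'def
  have hshift : ∀ (e d c : ℤ), (e + c) % d = (e % d + c) % d := by
    intro e d c
    have h := (Int.mod_modEq e d).add_right c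
    exact h.symm
  have hmod₂ : ∀ e : ℤ, 0 ≤ e % d₂ ∧ e % d₂ < d₂ :=
    fun e => ⟨Int.emod_nonneg e hd₂.ne', Int.emod_lt_of_pos e hd₂⟩
  have hmod₁ : ∀ e : ℤ, 0 ≤ e % d₁ ∧ e % d₁ < d₁ :=
    fun e => ⟨Int.emod_nonneg e hd₁.ne', Int.emod_lt_of_pos e hd₁⟩
  have hdvd₂ : ∀ e : ℤ, (p : ℤ) ∣ (e % d₂ - e) := by
    intro e
    refine dvd_trans hud ?_
    have h2 : e % d₂ - e = -(d₂ * (e / d₂)) := by rw [Int.emod_def]; ring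
    rw [h2]
    exact (Dvd.intro _ rfl).neg_right
  have hdvd₁ : ∀ e : ℤ, (p : ℤ) ∣ (e % d₁ - e) := by
    intro e
    refine dvd_trans htd ?_
    have h2 : e % d₁ - e = -(d₁ * (e / d₁)) := by rw [Int.emod_def]; ring
    rw [h2]
    exact (Dvd.intro _ rfl).neg_right
  have hval : ∀ l : ℤ, ∃ g : ℤ, x' l = x g ∧ a - n₀ ≤ g ∧ g ≤ b + n₀ ∧ (p : ℤ) ∣ g - l := by
    intro l
    by_cases h1 : l < u
    · refine ⟨u + (l - u) % d₂, by simp only [hx'def, if_pos h1], ?_, ?_, ?_⟩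
      · have := (hmod₂ (l - u)).1; omega
      · have := (hmod₂ (l - u)).2; omega
      · have h5 := hdvd₂ (l - u)
        have heq2 : u + (l - u) % d₂ - l = (l - u) % d₂ - (l - u) := by ring
        rw [heq2]; exact h5
    · by_cases h2 : l ≤ t'
      · exact ⟨l, by simp only [hx'def, if_neg h1, if_pos h2], by omega, by omega, by simp⟩
      · refine ⟨t + (l - t) % d₁, by simp only [hx'def, if_neg h1, if_neg h2], ?_, ?_, ?_⟩
        · have := (hmod₁ (l - t)).1; omega
        · have := (hmod₁ (l - t)).2; omega
        · have h5 := hdvd₁ (l - t)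
          have heq2 : t + (l - t) % d₁ - l = (l - t) % d₁ - (l - t) := by ring
          rw [heq2]; exact h5
  refine ⟨x', ?_, ?_, ?_⟩
  · -- SFT membership
    intro l
    have hE : ∀ i : ℤ, (x i, x (i + 1)) ∈ E := hx
    show (x' l, x' (l + 1)) ∈ E
    by_cases h1 : l + 1 < u
    · -- both backward
      have h1' : l < u := by omega
      have hb1 : x' l = x (u + (l - u) % d₂) := by simp only [hx'def, if_pos h1']
      have hb2 : x' (l + 1) = x (u + (l + 1 - u) % d₂) := by simp only [hx'def, if_pos h1]
      have hr0 := (hmod₂ (l - u)).1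
      have hr1 := (hmod₂ (l - u)).2
      have hme : (l + 1 - u) % d₂ = ((l - u) % d₂ + 1) % d₂ := by
        have e0 : l + 1 - u = (l - u) + 1 := by ring
        rw [e0, hshift]
      by_cases hc : (l - u) % d₂ + 1 < d₂
      · have h6 : ((l - u) % d₂ + 1) % d₂ = (l - u) % d₂ + 1 := Int.emod_eq_of_lt (by omega) hc
        rw [hb1, hb2, hme, h6]
        have e1 : u + ((l - u) % d₂ + 1) = (u + (l - u) % d₂) + 1 := by ring
        rw [e1]
        exact hE (u + (l - u) % d₂)
      · have hrd : (l - u) % d₂ + 1 = d₂ := by omega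
        have h6 : ((l - u) % d₂ + 1) % d₂ = 0 := by rw [hrd]; exact Int.emod_self
        rw [hb1, hb2, hme, h6]
        have e1 : u + (l - u) % d₂ = u' - 1 := by omega
        have e2 : u + (0 : ℤ) = u := by ring
        rw [e1, e2, hueq]
        have g := hE (u' - 1)
        have e4 : u' - 1 + 1 = u' := by ring
        rw [e4] at g
        exact g
    · by_cases h2 : l + 1 = u
      · -- backward into middle
        have h1' : l < u := by omega
        have hb1 : x' l = x (u + (l - u) % d₂) := by simp only [hx'def, if_pos h1']
        have hb2 : x' (l + 1) = x (l + 1) := by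
          simp only [hx'def, if_neg (show ¬ (l + 1 < u) by omega),
            if_pos (show l + 1 ≤ t' by omega)]
        have hlu : l - u = -1 := by omega
        have hm1 : (-1 : ℤ) % d₂ = d₂ - 1 := by
          have h3 : (-1 : ℤ) % d₂ = (d₂ - 1) % d₂ := by
            have : ((-1 : ℤ)) ≡ (d₂ - 1) [ZMOD d₂] := Int.modEq_iff_dvd.mpr (by
              have : d₂ - 1 - -1 = d₂ := by ring
              rw [this])
            exact this
          rw [h3]
          exact Int.emod_eq_of_lt (by omega) (by omega)
        rw [hb1, hb2, hlu, hm1, h2, hueq]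
        have g := hE (u' - 1)
        have e4 : u' - 1 + 1 = u' := by ring
        have e1 : u + (d₂ - 1) = u' - 1 := by omega
        rw [e4] at g
        rw [e1]
        exact g
      · by_cases h3 : l + 1 ≤ t'
        · -- both middle
          have hb1 : x' l = x l := by
            simp only [hx'def, if_neg (show ¬ (l < u) by omega),
              if_pos (show l ≤ t' by omega)]
          have hb2 : x' (l + 1) = x (l + 1) := by
            simp only [hx'def, if_neg (show ¬ (l + 1 < u) by omega), if_pos h3]
          rw [hb1, hb2]; exact hE l
        · by_cases h4 : l = t'
          · -- middle into forward
            have hb1 : x' l = x t' := by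
              rw [h4]
              simp only [hx'def, if_neg (show ¬ (t' < u) by omega), if_pos (le_refl t')]
            have hb2 : x' (l + 1) = x (t + (l + 1 - t) % d₁) := by
              simp only [hx'def, if_neg (show ¬ (l + 1 < u) by omega),
                if_neg (show ¬ (l + 1 ≤ t') by omega)]
            have he : (l + 1 - t) % d₁ = 1 % d₁ := by
              have e0 : l + 1 - t = 1 + d₁ * 1 := by omega
              rw [e0, Int.add_mul_emod_self_left]
            rw [hb1, hb2, he]
            by_cases hd : d₁ = 1
            · have h6 : (1 : ℤ) % d₁ = 0 := by rw [hd]; simp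
              have ht' : t' = t + 1 := by omega
              rw [h6]
              have e2 : t + (0 : ℤ) = t := by ring
              rw [e2]
              have g := hE t
              have h7 : x (t + 1) = x t := by rw [← ht']; exact hteq.symm
              rw [h7] at g
              rw [ht', h7]
              exact g
            · have h6 : (1 : ℤ) % d₁ = 1 := Int.emod_eq_of_lt (by omega) (by omega)
              rw [h6, ← hteq]
              exact hE t
          · -- both forward
            have hb1 : x' l = x (t + (l - t) % d₁) := by
              simp only [hx'def, if_neg (show ¬ (l < u) by omega),
                if_neg (show ¬ (l ≤ t') by omega)]
            have hb2 : x' (l + 1) = x (t + (l + 1 - t) % d₁) := by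
              simp only [hx'def, if_neg (show ¬ (l + 1 < u) by omega),
                if_neg (show ¬ (l + 1 ≤ t') by omega)]
            have hr0 := (hmod₁ (l - t)).1
            have hr1 := (hmod₁ (l - t)).2
            have hme : (l + 1 - t) % d₁ = ((l - t) % d₁ + 1) % d₁ := by
              have e0 : l + 1 - t = (l - t) + 1 := by ring
              rw [e0, hshift]
            by_cases hc : (l - t) % d₁ + 1 < d₁
            · have h6 : ((l - t) % d₁ + 1) % d₁ = (l - t) % d₁ + 1 :=
                Int.emod_eq_of_lt (by omega) hc
              rw [hb1, hb2, hme, h6]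
              have e1 : t + ((l - t) % d₁ + 1) = (t + (l - t) % d₁) + 1 := by ring
              rw [e1]
              exact hE (t + (l - t) % d₁)
            · have hrd : (l - t) % d₁ + 1 = d₁ := by omega
              have h6 : ((l - t) % d₁ + 1) % d₁ = 0 := by rw [hrd]; exact Int.emod_self
              rw [hb1, hb2, hme, h6]
              have e1 : t + (l - t) % d₁ = t' - 1 := by omega
              have e2 : t + (0 : ℤ) = t := by ring
              rw [e1, e2, hteq]
              have g := hE (t' - 1)
              have e4 : t' - 1 + 1 = t' := by ring
              rw [e4] at g
              exact g
  · -- fiber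
    funext l
    obtain ⟨g, hg1, hg2, hg3, hg4⟩ := hval l
    show Φ (x' l) = y l
    rw [hg1, hover g hg2 hg3]
    exact intPer_dvd_apply hper hg4
  · -- agreement on [a, b]
    intro l hl1 hl2
    simp only [hx'def, if_neg (show ¬ (l < u) by omega), if_pos (show l ≤ t' by omega)]

/-! ### the recoding construction -/

lemma dvd_emod_sub (p : ℕ) (e : ℤ) : (p : ℤ) ∣ (e % p - e) := by
  have h : e % p - e = -((p : ℤ) * (e / p)) := by rw [Int.emod_def]; ring
  rw [h]
  exact (Dvd.intro _ rfl).neg_right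

lemma overAt_phase {Φ : A → A} {y : ℤ → A} {p : ℕ} (hp : 0 < p)
    (hleast : ∀ d : ℤ, IntPer y d → (p : ℤ) ∣ d)
    {L : ℕ} (hL : p ≤ L) {w : Fin L → A} {k k' : ℤ}
    (hper : IntPer y (p : ℤ))
    (h : ∀ j : Fin L, Φ (w j) = y (k + (j : ℤ)))
    (h' : ∀ j : Fin L, Φ (w j) = y (k' + (j : ℤ))) :
    (p : ℤ) ∣ k - k' := by
  have key : IntPer y (k - k') := by
    intro i
    have hpne : (p : ℤ) ≠ 0 := by exact_mod_cast hp.ne'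
    set j₀ := (i - k') % (p : ℤ) with hj
    have h0 : 0 ≤ j₀ := Int.emod_nonneg _ hpne
    have h1 : j₀ < (p : ℤ) := Int.emod_lt_of_pos _ (by exact_mod_cast hp)
    have hjL : j₀.toNat < L := by omega
    set j : Fin L := ⟨j₀.toNat, hjL⟩ with hjdef
    have hcast : ((j : ℤ)) = j₀ := by
      simp [hjdef, Int.toNat_of_nonneg h0]
    have e1 : y (k' + (j : ℤ)) = y i := by
      apply intPer_dvd_apply hper
      rw [hcast]
      have h2 := dvd_emod_sub p (i - k')
      rw [← hj] at h2
      have e : k' + j₀ - i = j₀ - (i - k') := by ring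
      rw [e]
      exact h2
    have e2 : y (k + (j : ℤ)) = y (i + (k - k')) := by
      apply intPer_dvd_apply hper
      rw [hcast]
      have h2 := dvd_emod_sub p (i - k')
      rw [← hj] at h2
      have e : k + j₀ - (i + (k - k')) = j₀ - (i - k') := by ring
      rw [e]
      exact h2
    calc y (i + (k - k')) = y (k + (j : ℤ)) := e2.symm
      _ = Φ (w j) := (h j).symm
      _ = y (k' + (j : ℤ)) := h' j
      _ = y i := e1
  exact hleast _ key

def winF (q : ℕ) (x : ℤ → A) (i : ℤ) : Fin (2 * q + 1) → A :=
  fun j => x (i - q + (j : ℤ))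

lemma winF_shift (q : ℕ) (x : ℤ → A) (i : ℤ) :
    winF q (shiftMap x) i = winF q x (i + 1) := by
  funext j
  show x (i - q + (j : ℤ) + 1) = x (i + 1 - q + (j : ℤ))
  congr 1
  ring

def ctrW (n₀ p : ℕ) (w : Fin (2 * (2 * n₀ + p) + 1) → A) : Fin (2 * (n₀ + p) + 1) → A :=
  fun j => w ⟨j.val + n₀, by have := j.isLt; omega⟩

def GoodW (X : Set (ℤ → A)) (Φ : A → A) (y : ℤ → A) (p n₀ : ℕ)
    (u : Fin (2 * (n₀ + p) + 1) → A) (k : ℤ) : Prop :=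
  ∃ zr : (ℤ → A) × ℤ, zr.1 ∈ X ∧ blockCode Φ zr.1 = y ∧ (p : ℤ) ∣ (zr.2 - k) ∧
    ∀ j : Fin (2 * (n₀ + p) + 1), zr.1 (zr.2 + (j : ℤ)) = u j

open Classical in
noncomputable def canon (X : Set (ℤ → A)) (Φ : A → A) (y : ℤ → A) (p n₀ : ℕ)
    (u : Fin (2 * (n₀ + p) + 1) → A) (k : ℤ) : Fin (2 * (2 * n₀ + p) + 1) → A :=
  if h : GoodW X Φ y p n₀ u k then fun j => h.choose.1 (h.choose.2 - n₀ + (j : ℤ))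
  else fun _ => u ⟨n₀ + p, by omega⟩

lemma canon_eq {X : Set (ℤ → A)} {Φ : A → A} {y : ℤ → A} {p n₀ : ℕ}
    {u : Fin (2 * (n₀ + p) + 1) → A} {k : ℤ} (h : GoodW X Φ y p n₀ u k) :
    ∃ z : ℤ → A, ∃ r : ℤ, z ∈ X ∧ blockCode Φ z = y ∧ (p : ℤ) ∣ (r - k) ∧
      (∀ j : Fin (2 * (n₀ + p) + 1), z (r + (j : ℤ)) = u j) ∧
      canon X Φ y p n₀ u k = fun j : Fin (2 * (2 * n₀ + p) + 1) => z (r - n₀ + (j : ℤ)) := by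
  refine ⟨h.choose.1, h.choose.2, h.choose_spec.1, h.choose_spec.2.1,
    h.choose_spec.2.2.1, h.choose_spec.2.2.2, ?_⟩
  unfold canon
  rw [dif_pos h]

open Classical in
noncomputable def phiF (X : Set (ℤ → A)) (Φ : A → A) (y : ℤ → A) (p n₀ : ℕ)
    (x : ℤ → A) (i : ℤ) : Fin (2 * (2 * n₀ + p) + 1) → A :=
  if h : ∃ k : ℤ,
      (∀ j : Fin (2 * (2 * n₀ + p) + 1), Φ (winF (2 * n₀ + p) x i j) = y (k + (j : ℤ))) ∧
      GoodW X Φ y p n₀ (ctrW n₀ p (winF (2 * n₀ + p) x i)) ((k + (n₀ : ℤ)) % (p : ℤ))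
  then canon X Φ y p n₀ (ctrW n₀ p (winF (2 * n₀ + p) x i))
    ((h.choose + (n₀ : ℤ)) % (p : ℤ))
  else winF (2 * n₀ + p) x i

lemma phiF_congr {X : Set (ℤ → A)} {Φ : A → A} {y : ℤ → A} {p n₀ : ℕ}
    {x x' : ℤ → A} {i i' : ℤ} (h : winF (2 * n₀ + p) x i = winF (2 * n₀ + p) x' i') :
    phiF X Φ y p n₀ x i = phiF X Φ y p n₀ x' i' := by
  unfold phiF
  rw [h]

lemma phiF_center {X : Set (ℤ → A)} {Φ : A → A} {y : ℤ → A} {p n₀ : ℕ}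
    (x : ℤ → A) (i : ℤ) :
    phiF X Φ y p n₀ x i ⟨2 * n₀ + p, by omega⟩ = x i := by
  unfold phiF
  split
  next h =>
    obtain ⟨z, r, hzX, hzy, hdvd, hzu, hcanon⟩ := canon_eq h.choose_spec.2
    rw [congrFun hcanon ⟨2 * n₀ + p, by omega⟩]
    have h1 : z (r - (n₀ : ℤ) + ((⟨2 * n₀ + p, by omega⟩ : Fin (2 * (2 * n₀ + p) + 1)) : ℤ))
        = z (r + ((⟨n₀ + p, by omega⟩ : Fin (2 * (n₀ + p) + 1)) : ℤ)) := by
      congr 1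
      simp only [Fin.val_mk]
      push_cast
      ring
    rw [h1, hzu ⟨n₀ + p, by omega⟩]
    show winF (2 * n₀ + p) x i ⟨n₀ + p + n₀, by omega⟩ = x i
    show x (i - (2 * n₀ + p : ℕ) + ((n₀ + p + n₀ : ℕ) : ℤ)) = x i
    congr 1
    push_cast
    ring
  next h =>
    show x (i - (2 * n₀ + p : ℕ) + ((2 * n₀ + p : ℕ) : ℤ)) = x i
    congr 1
    ring

lemma phiF_comp {X : Set (ℤ → A)} {Φ : A → A} {y : ℤ → A} {p n₀ : ℕ}
    (hper : IntPer y (p : ℤ)) (x : ℤ → A) (i : ℤ) (j : Fin (2 * (2 * n₀ + p) + 1)) :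
    Φ (phiF X Φ y p n₀ x i j) = Φ (x (i - (2 * n₀ + p : ℕ) + (j : ℤ))) := by
  unfold phiF
  split
  next h =>
    obtain ⟨z, r, hzX, hzy, hdvd, hzu, hcanon⟩ := canon_eq h.choose_spec.2
    rw [hcanon]
    have h1 : Φ (z (r - (n₀ : ℤ) + (j : ℤ))) = y (r - (n₀ : ℤ) + (j : ℤ)) :=
      congrFun hzy _
    have h2 : Φ (x (i - (2 * n₀ + p : ℕ) + (j : ℤ))) = y (h.choose + (j : ℤ)) :=
      h.choose_spec.1 j
    rw [h1, h2]
    apply intPer_dvd_apply hper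
    have h3 := dvd_emod_sub p (h.choose + (n₀ : ℤ))
    have h4 : r - (n₀ : ℤ) + (j : ℤ) - (h.choose + (j : ℤ))
        = (r - (h.choose + (n₀ : ℤ)) % (p : ℤ))
          + ((h.choose + (n₀ : ℤ)) % (p : ℤ) - (h.choose + (n₀ : ℤ))) := by ring
    rw [h4]
    exact dvd_add hdvd h3
  next h => rfl

lemma phiF_match {X : Set (ℤ → A)} {Φ : A → A} {y : ℤ → A} {p n₀ : ℕ}
    (hp : 0 < p) (hper : IntPer y (p : ℤ)) (hleast : ∀ d : ℤ, IntPer y d → (p : ℤ) ∣ d)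
    (x x' : ℤ → A) (hx'X : x' ∈ X) (hx'y : blockCode Φ x' = y) (i : ℤ)
    (hover : ∀ j : Fin (2 * (2 * n₀ + p) + 1),
      Φ (x (i - (2 * n₀ + p : ℕ) + (j : ℤ))) = y (i - (2 * n₀ + p : ℕ) + (j : ℤ)))
    (hagree : ∀ l : ℤ, i - (n₀ + p : ℕ) ≤ l → l ≤ i + (n₀ + p : ℕ) → x' l = x l) :
    phiF X Φ y p n₀ x i = phiF X Φ y p n₀ x' i := by
  have hctr : ctrW n₀ p (winF (2 * n₀ + p) x' i) = ctrW n₀ p (winF (2 * n₀ + p) x i) := by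
    funext j
    show x' (i - (2 * n₀ + p : ℕ) + ((j.val + n₀ : ℕ) : ℤ))
      = x (i - (2 * n₀ + p : ℕ) + ((j.val + n₀ : ℕ) : ℤ))
    apply hagree
    · have := j.isLt
      push_cast
      omega
    · have := j.isLt
      push_cast
      omega
  have hgood' : GoodW X Φ y p n₀ (ctrW n₀ p (winF (2 * n₀ + p) x' i))
      ((i - (2 * n₀ + p : ℕ) + (n₀ : ℤ)) % (p : ℤ)) := by
    refine ⟨(x', i - (2 * n₀ + p : ℕ) + (n₀ : ℤ)), hx'X, hx'y, ?_, ?_⟩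
    · have h3 := dvd_emod_sub p (i - (2 * n₀ + p : ℕ) + (n₀ : ℤ))
      have h4 : i - (2 * n₀ + p : ℕ) + (n₀ : ℤ)
          - (i - (2 * n₀ + p : ℕ) + (n₀ : ℤ)) % (p : ℤ)
          = -((i - (2 * n₀ + p : ℕ) + (n₀ : ℤ)) % (p : ℤ)
            - (i - (2 * n₀ + p : ℕ) + (n₀ : ℤ))) := by ring
      rw [h4]
      exact h3.neg_right
    · intro j
      show x' (i - (2 * n₀ + p : ℕ) + (n₀ : ℤ) + (j : ℤ))
        = x' (i - (2 * n₀ + p : ℕ) + ((j.val + n₀ : ℕ) : ℤ))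
      congr 1
      push_cast
      ring
  have hover' : ∀ j : Fin (2 * (2 * n₀ + p) + 1),
      Φ (winF (2 * n₀ + p) x' i j) = y ((i - (2 * n₀ + p : ℕ)) + (j : ℤ)) := by
    intro j
    exact congrFun hx'y _
  have h' : ∃ k : ℤ,
      (∀ j : Fin (2 * (2 * n₀ + p) + 1), Φ (winF (2 * n₀ + p) x' i j) = y (k + (j : ℤ))) ∧
      GoodW X Φ y p n₀ (ctrW n₀ p (winF (2 * n₀ + p) x' i)) ((k + (n₀ : ℤ)) % (p : ℤ)) :=
    ⟨i - (2 * n₀ + p : ℕ), hover', hgood'⟩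
  have h : ∃ k : ℤ,
      (∀ j : Fin (2 * (2 * n₀ + p) + 1), Φ (winF (2 * n₀ + p) x i j) = y (k + (j : ℤ))) ∧
      GoodW X Φ y p n₀ (ctrW n₀ p (winF (2 * n₀ + p) x i)) ((k + (n₀ : ℤ)) % (p : ℤ)) := by
    refine ⟨i - (2 * n₀ + p : ℕ), ?_, hctr ▸ hgood'⟩
    intro j
    exact hover j
  unfold phiF
  rw [dif_pos h, dif_pos h']
  have hL : p ≤ 2 * (2 * n₀ + p) + 1 := by omega
  have hk1 : (p : ℤ) ∣ h.choose - (i - (2 * n₀ + p : ℕ)) :=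
    overAt_phase hp hleast hL hper h.choose_spec.1 (fun j => hover j)
  have hk2 : (p : ℤ) ∣ h'.choose - (i - (2 * n₀ + p : ℕ)) :=
    overAt_phase hp hleast hL hper h'.choose_spec.1 hover'
  have he : (h.choose + (n₀ : ℤ)) % (p : ℤ) = (h'.choose + (n₀ : ℤ)) % (p : ℤ) := by
    have m1 : h.choose + (n₀ : ℤ) ≡ (i - (2 * n₀ + p : ℕ)) + (n₀ : ℤ) [ZMOD (p : ℤ)] := by
      apply Int.modEq_iff_dvd.mpr
      have e : (i - (2 * n₀ + p : ℕ)) + (n₀ : ℤ) - (h.choose + (n₀ : ℤ))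
          = -(h.choose - (i - (2 * n₀ + p : ℕ))) := by ring
      rw [e]
      exact hk1.neg_right
    have m2 : h'.choose + (n₀ : ℤ) ≡ (i - (2 * n₀ + p : ℕ)) + (n₀ : ℤ) [ZMOD (p : ℤ)] := by
      apply Int.modEq_iff_dvd.mpr
      have e : (i - (2 * n₀ + p : ℕ)) + (n₀ : ℤ) - (h'.choose + (n₀ : ℤ))
          = -(h'.choose - (i - (2 * n₀ + p : ℕ))) := by ring
      rw [e]
      exact hk2.neg_right
    exact m1.trans m2.symm
  exact congrArg₂ (canon X Φ y p n₀) hctr.symm he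

/-- **Lemma 4.1 (local retract).**
Given a periodic point `y ∈ Y` there are conjugacies `φ : X → X̄` and `ψ : Y → Ȳ`
such that `π̄ = ψ ∘ π ∘ φ⁻¹` is a 1-block factor map (with block map `Ψ`) for which
the blocks of preimages of `ȳ = ψ(y)` on any interval `[m,n]` are exactly the blocks
of `X̄` on `[m,n]` mapped by `Ψ` to `ȳ|_{[m,n]}`. -/
theorem local_retract
    {A : Type u} [Fintype A] (E : Set (A × A)) (Φ : A → A) (X : Set (ℤ → A))
    (hX : X = SFT E) (hmix : Mixing X)
    (Y : Set (ℤ → A)) (hY : Y = blockCode Φ '' X)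
    (y : ℤ → A) (hy : y ∈ Y) (hyper : IsPeriodicPt y) :
    ∃ (B : Type u) (_ : Fintype B)
      (φ : (ℤ → A) → (ℤ → B)) (φinv : (ℤ → B) → (ℤ → A))
      (ψ : (ℤ → A) → (ℤ → B)) (ψinv : (ℤ → B) → (ℤ → A)) (Ψ : B → B),
      -- `φ` is a conjugacy from `X` onto `X̄ = φ '' X`
      SlidingBlockOn X φ ∧ SlidingBlockOn (φ '' X) φinv ∧ (∀ x ∈ X, φinv (φ x) = x) ∧
      -- `ψ` is a conjugacy from `Y` onto `Ȳ = ψ '' Y`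
      SlidingBlockOn Y ψ ∧ SlidingBlockOn (ψ '' Y) ψinv ∧ (∀ z ∈ Y, ψinv (ψ z) = z) ∧
      -- `π̄ = ψ ∘ π ∘ φ⁻¹` is the 1-block map induced by `Ψ`
      (∀ x ∈ X, blockCode Ψ (φ x) = ψ (blockCode Φ x)) ∧
      -- `π̄⁻¹(ȳ)|_{[m,n]} = π̄⁻¹(ȳ|_{[m,n]})`
      (∀ m n : ℤ, m ≤ n →
        (fun xb : ℤ → B => fun i : (Set.Icc m n : Set ℤ) => xb i.1) ''
            {xb | xb ∈ φ '' X ∧ blockCode Ψ xb = ψ y}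
          = (fun xb : ℤ → B => fun i : (Set.Icc m n : Set ℤ) => xb i.1) ''
            {xb | xb ∈ φ '' X ∧ ∀ i : ℤ, m ≤ i → i ≤ n → Ψ (xb i) = ψ y i}) := by
  classical
  subst hX
  subst hY
  obtain ⟨p, hp, hper, hleast⟩ := exists_least_period y hyper
  obtain ⟨n₀, hn₀⟩ : ∃ n₀ : ℕ, p * Fintype.card A ≤ n₀ := ⟨_, le_refl _⟩
  set X : Set (ℤ → A) := SFT E with hXdef
  refine ⟨(Fin (2 * (2 * n₀ + p) + 1) → A), inferInstance,
    (fun x i => phiF X Φ y p n₀ x i),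
    (fun xb i => xb i ⟨2 * n₀ + p, by omega⟩),
    (fun z i => winF (2 * n₀ + p) z i),
    (fun w i => w i ⟨2 * n₀ + p, by omega⟩),
    (fun c j => Φ (c j)), ?_, ?_, ?_, ?_, ?_, ?_, ?_, ?_⟩
  · -- SlidingBlockOn X φ
    refine ⟨fun x _ => funext fun i => phiF_congr (winF_shift (2 * n₀ + p) x i),
      ⟨2 * n₀ + p, fun x _ x' _ i hag => phiF_congr ?_⟩⟩
    funext j
    show x (i - (2 * n₀ + p : ℕ) + (j : ℤ)) = x' (i - (2 * n₀ + p : ℕ) + (j : ℤ))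
    apply hag
    · have := j.isLt; push_cast; omega
    · have := j.isLt; push_cast; omega
  · -- SlidingBlockOn (φ '' X) φinv
    refine ⟨fun xb _ => rfl, ⟨0, fun xb _ xb' _ i hag => ?_⟩⟩
    have h0 := hag i (by omega) (by omega)
    show xb i ⟨2 * n₀ + p, by omega⟩ = xb' i ⟨2 * n₀ + p, by omega⟩
    rw [h0]
  · -- φinv ∘ φ = id on X
    intro x _
    funext i
    exact phiF_center x i
  · -- SlidingBlockOn Y ψ
    refine ⟨fun z _ => funext fun i => winF_shift (2 * n₀ + p) z i,
      ⟨2 * n₀ + p, fun z _ z' _ i hag => ?_⟩⟩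
    funext j
    show z (i - (2 * n₀ + p : ℕ) + (j : ℤ)) = z' (i - (2 * n₀ + p : ℕ) + (j : ℤ))
    apply hag
    · have := j.isLt; push_cast; omega
    · have := j.isLt; push_cast; omega
  · -- SlidingBlockOn (ψ '' Y) ψinv
    refine ⟨fun w _ => rfl, ⟨0, fun w _ w' _ i hag => ?_⟩⟩
    have h0 := hag i (by omega) (by omega)
    show w i ⟨2 * n₀ + p, by omega⟩ = w' i ⟨2 * n₀ + p, by omega⟩
    rw [h0]
  · -- ψinv ∘ ψ = id on Y
    intro z _
    funext i
    show z (i - (2 * n₀ + p : ℕ) + ((2 * n₀ + p : ℕ) : ℤ)) = z i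
    congr 1
    ring
  · -- π̄ is induced by Ψ
    intro x _
    funext i
    funext j
    show Φ (phiF X Φ y p n₀ x i j) = blockCode Φ x (i - (2 * n₀ + p : ℕ) + (j : ℤ))
    rw [phiF_comp (X := X) (Φ := Φ) hper]
    rfl
  · -- the main block equality
    intro m n hmn
    apply Set.Subset.antisymm
    · rintro f ⟨xb, ⟨hxbX, hxby⟩, rfl⟩
      exact ⟨xb, ⟨hxbX, fun i _ _ => congrFun hxby i⟩, rfl⟩
    · rintro f ⟨xb, ⟨⟨x, hxX, rfl⟩, hcond⟩, rfl⟩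
      -- Step 1: x lies over y on [m - (2n₀+p), n + (2n₀+p)]
      have hstep1 : ∀ l : ℤ, m - (2 * n₀ + p : ℕ) ≤ l → l ≤ n + (2 * n₀ + p : ℕ) →
          Φ (x l) = y l := by
        intro l hl1 hl2
        obtain ⟨i, him⟩ : ∃ i : ℤ, m ≤ i ∧ i ≤ n ∧
            i - (2 * n₀ + p : ℕ) ≤ l ∧ l ≤ i + (2 * n₀ + p : ℕ) := by
          rcases le_total l m with h | h
          · exact ⟨m, le_refl m, hmn, by push_cast at hl1 ⊢; omega, by push_cast; omega⟩
          · rcases le_total n l with h2 | h2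
            · exact ⟨n, hmn, le_refl n, by push_cast; omega, by push_cast at hl2 ⊢; omega⟩
            · exact ⟨l, h, h2, by push_cast; omega, by push_cast; omega⟩
        obtain ⟨him1, him2, him3, him4⟩ := him
        have hj0 : (0 : ℤ) ≤ l - (i - (2 * n₀ + p : ℕ)) := by omega
        have hj1 : l - (i - (2 * n₀ + p : ℕ)) < (2 * (2 * n₀ + p) + 1 : ℕ) := by
          push_cast; omega
        set j : Fin (2 * (2 * n₀ + p) + 1) := ⟨(l - (i - (2 * n₀ + p : ℕ))).toNat, by omega⟩
          with hjdef
        have hjcast : ((j : ℤ)) = l - (i - (2 * n₀ + p : ℕ)) := by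
          rw [hjdef]
          exact Int.toNat_of_nonneg hj0
        have hc : Φ (phiF X Φ y p n₀ x i j) = y (i - (2 * n₀ + p : ℕ) + (j : ℤ)) :=
          congrFun (hcond i him1 him2) j
        rw [phiF_comp (X := X) (Φ := Φ) hper] at hc
        have hpos : i - (2 * n₀ + p : ℕ) + (j : ℤ) = l := by rw [hjcast]; ring
        rw [hpos] at hc
        exact hc
      -- Step 2: find a fiber point agreeing with x on [m - (n₀+p), n + (n₀+p)]
      obtain ⟨x', hx'SFT, hx'y, hagree⟩ :=
        margin_extend E Φ y p hp hper n₀ hn₀ (m - (n₀ + p : ℕ)) (n + (n₀ + p : ℕ))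
          (by omega) x hxX
          (by
            intro l hl1 hl2
            apply hstep1 <;> push_cast at hl1 hl2 ⊢ <;> omega)
      -- Step 3: φ x' has the same restriction to [m, n]
      refine ⟨phiF X Φ y p n₀ x', ⟨⟨x', hx'SFT, rfl⟩, ?_⟩, ?_⟩
      · funext i
        funext j
        show Φ (phiF X Φ y p n₀ x' i j) = winF (2 * n₀ + p) y i j
        rw [phiF_comp (X := X) (Φ := Φ) hper]
        exact congrFun hx'y _
      · funext i
        obtain ⟨i, hi⟩ := i
        obtain ⟨him, hin⟩ := Set.mem_Icc.mp hi
        show phiF X Φ y p n₀ x' i = phiF X Φ y p n₀ x i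
        refine (phiF_match hp hper hleast x x' hx'SFT hx'y i ?_ ?_).symm
        · intro j
          apply hstep1 <;> have := j.isLt <;> push_cast <;> omega
        · intro l hl1 hl2
          apply hagree <;> push_cast at hl1 hl2 ⊢ <;> omega


end GibbsPaper
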